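/- Let σ > 0, let x, δ ∈ ℝ^m, let a ∈ ℝ, and let A ⊆ ℝ^m be measurable. If the isotropic Gaussian measure N(x, σ²I) satisfies N(x, σ²I)(A) ≥ Φ(a), then the shifted measure satisfies N(x + δ, σ²I)(A) ≥ Φ(a − ‖δ‖₂/σ). -/

import Mathlib

open MeasureTheory ProbabilityTheory
open Real
open scoped NNReal ENNReal

/-- The standard Gaussian CDF `Φ`. -/
noncomputable def Phi (a : ℝ) : ℝ := ((gaussianReal 0 1) (Set.Iic a)).toReal

lemma ofReal_Phi (a : ℝ) : ENNReal.ofReal (Phi a) = gaussianReal 0 1 (Set.Iic a) :=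
  ENNReal.ofReal_toReal (measure_ne_top _ _)

lemma gaussianReal_eq_map (m : ℝ) (v : ℝ≥0) (hv : v ≠ 0) :
    gaussianReal m v = Measure.map (fun z => m + Real.sqrt v * z) (gaussianReal 0 1) := by
  have h1 : (gaussianReal 0 1).map (Real.sqrt v * ·) = gaussianReal 0 v := by
    rw [gaussianReal_map_const_mul]
    congr 1
    · simp
    · ext
      simp [Real.sq_sqrt v.coe_nonneg]
  have h2 : (gaussianReal 0 v).map (m + ·) = gaussianReal m v := by
    rw [gaussianReal_map_const_add]; simp
  rw [← h2, ← h1, Measure.map_map (by fun_prop) (by fun_prop)]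
  rfl

lemma gaussianReal_Iic (m t : ℝ) {v : ℝ≥0} (hv : v ≠ 0) :
    gaussianReal m v (Set.Iic t) = ENNReal.ofReal (Phi ((t - m) / Real.sqrt v)) := by
  have hvpos : (0:ℝ) < (v:ℝ) := lt_of_le_of_ne v.coe_nonneg (by exact_mod_cast hv.symm)
  have hs : (0:ℝ) < Real.sqrt v := Real.sqrt_pos.2 hvpos
  rw [gaussianReal_eq_map m v hv, Measure.map_apply (by fun_prop) measurableSet_Iic,
    ofReal_Phi]
  congr 1
  ext z
  simp only [Set.mem_preimage, Set.mem_Iic, le_div_iff₀ hs]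
  constructor <;> intro h <;> nlinarith


lemma pdf_conv (v w : ℝ≥0) (hv : v ≠ 0) (hw : w ≠ 0) (y : ℝ) :
    ∫⁻ x, gaussianPDF 0 v x * gaussianPDF x w y ∂volume = gaussianPDF 0 (v + w) y := by
  have hvp : (0:ℝ) < v := lt_of_le_of_ne v.coe_nonneg (by exact_mod_cast hv.symm)
  have hwp : (0:ℝ) < w := lt_of_le_of_ne w.coe_nonneg (by exact_mod_cast hw.symm)
  set b : ℝ := ((v:ℝ) + w) / (2 * v * w) with hb_def
  have hb : 0 < b := by positivity
  have hπb : (0:ℝ) < π / b := by positivity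
  set μ₀ : ℝ := v * y / (v + w) with hμ₀
  set C : ℝ := gaussianPDFReal 0 (v + w) y * (Real.sqrt (π / b))⁻¹ with hC
  have hCnn : 0 ≤ C := mul_nonneg (gaussianPDFReal_nonneg _ _ _) (by positivity)
  have hpt : ∀ x, gaussianPDFReal 0 v x * gaussianPDFReal x w y
      = C * rexp (-b * (x - μ₀) ^ 2) := by
    intro x
    have hc : (Real.sqrt (2 * π * v))⁻¹ * (Real.sqrt (2 * π * w))⁻¹
        = (Real.sqrt (2 * π * ((v:ℝ) + w)))⁻¹ * (Real.sqrt (π / b))⁻¹ := by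
      have key : 2 * π * (v:ℝ) * (2 * π * w) = 2 * π * ((v:ℝ) + w) * (π / b) := by
        rw [hb_def]; field_simp
      rw [← mul_inv, ← mul_inv, ← Real.sqrt_mul (by positivity), ← Real.sqrt_mul (by positivity),
        key]
    have he : -(x - 0) ^ 2 / (2 * v) + -(y - x) ^ 2 / (2 * w)
        = -(y - 0) ^ 2 / (2 * ((v:ℝ) + w)) + -b * (x - μ₀) ^ 2 := by
      rw [hb_def, hμ₀]
      field_simp
      ring
    simp only [gaussianPDFReal, hC, NNReal.coe_add]
    rw [mul_mul_mul_comm, ← Real.exp_add, he, Real.exp_add, hc]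
    ring
  calc ∫⁻ x, gaussianPDF 0 v x * gaussianPDF x w y ∂volume
      = ∫⁻ x, ENNReal.ofReal (C * rexp (-b * (x - μ₀) ^ 2)) ∂volume := by
        congr 1; ext x
        rw [gaussianPDF, gaussianPDF, ← ENNReal.ofReal_mul (gaussianPDFReal_nonneg _ _ _), hpt x]
    _ = ENNReal.ofReal (∫ x, C * rexp (-b * (x - μ₀) ^ 2)) := by
        refine (ofReal_integral_eq_lintegral_ofReal ?_ ?_).symm
        · exact ((integrable_exp_neg_mul_sq hb).comp_sub_right μ₀).const_mul C
        · exact ae_of_all _ fun x => mul_nonneg hCnn (Real.exp_nonneg _)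
    _ = ENNReal.ofReal (C * Real.sqrt (π / b)) := by
        rw [integral_const_mul]
        congr 2
        rw [← integral_gaussian b]
        exact integral_sub_right_eq_self (fun x => rexp (-b * x ^ 2)) μ₀
    _ = gaussianPDF 0 (v + w) y := by
        rw [hC, mul_assoc, inv_mul_cancel₀ (by positivity), mul_one]
        rfl

lemma measurable_gaussianPDF2 (w : ℝ≥0) :
    Measurable fun p : ℝ × ℝ => gaussianPDF p.1 w p.2 := by
  simp only [gaussianPDF, gaussianPDFReal]
  fun_prop

lemma gaussian_conv (v w : ℝ≥0) :
    Measure.map (fun p : ℝ × ℝ => p.1 + p.2) ((gaussianReal 0 v).prod (gaussianReal 0 w))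
      = gaussianReal 0 (v + w) := by
  by_cases hv : v = 0
  · subst hv
    rw [gaussianReal_zero_var, Measure.dirac_prod,
      Measure.map_map (by fun_prop) (by fun_prop)]
    have : ((fun p : ℝ × ℝ => p.1 + p.2) ∘ fun y => ((0:ℝ), y)) = fun y => (0:ℝ) + y := rfl
    rw [this, gaussianReal_map_const_add, zero_add, zero_add]
  by_cases hw : w = 0
  · subst hw
    rw [gaussianReal_zero_var, Measure.prod_dirac,
      Measure.map_map (by fun_prop) (by fun_prop)]
    have : ((fun p : ℝ × ℝ => p.1 + p.2) ∘ fun x => (x, (0:ℝ))) = fun x => x + (0:ℝ) := rfl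
    rw [this, gaussianReal_map_add_const, add_zero, add_zero]
  ext s hs
  rw [Measure.map_apply (by fun_prop) hs, Measure.prod_apply (hs.preimage (by fun_prop))]
  have hG := measurable_gaussianPDF2 w
  have step1 : ∀ x : ℝ, gaussianReal 0 w (Prod.mk x ⁻¹' ((fun p : ℝ × ℝ => p.1 + p.2) ⁻¹' s))
      = ∫⁻ y in s, gaussianPDF x w y := by
    intro x
    have hpre : Prod.mk x ⁻¹' ((fun p : ℝ × ℝ => p.1 + p.2) ⁻¹' s) = (fun y => x + y) ⁻¹' s := rfl
    rw [hpre, ← Measure.map_apply (by fun_prop) hs, gaussianReal_map_const_add, zero_add,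
      gaussianReal_apply _ hw]
  simp_rw [step1]
  have hGx : Measurable fun x => ∫⁻ y in s, gaussianPDF x w y :=
    Measurable.lintegral_prod_right hG
  rw [gaussianReal_of_var_ne_zero _ hv, lintegral_withDensity_eq_lintegral_mul _
    (measurable_gaussianPDF _ _) hGx]
  have step2 : (fun x => gaussianPDF 0 v x * ∫⁻ y in s, gaussianPDF x w y)
      = fun x => ∫⁻ y in s, gaussianPDF 0 v x * gaussianPDF x w y := by
    ext x
    rw [lintegral_const_mul _ (by fun_prop)]
  simp only [Pi.mul_apply]
  rw [step2, lintegral_lintegral_swap (((measurable_gaussianPDF 0 v).comp measurable_fst).mul hG).aemeasurable]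
  simp_rw [pdf_conv v w hv hw]
  rw [← gaussianReal_apply _ (by simp [hv]) s]

lemma gauss_sum_law (v : ℝ≥0) : ∀ (n : ℕ) (c : Fin n → ℝ),
    Measure.map (fun y : Fin n → ℝ => ∑ i, c i * y i) (Measure.pi fun _ => gaussianReal 0 v)
      = gaussianReal 0 ((∑ i, c i ^ 2).toNNReal * v) := by
  intro n
  induction n with
  | zero =>
    intro c
    have h0 : (fun y : Fin 0 → ℝ => ∑ i, c i * y i) = fun _ => (0:ℝ) := by
      funext y; simp
    rw [h0, Measure.map_const]
    simp [gaussianReal_zero_var]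
  | succ n ih =>
    intro c
    set e := MeasurableEquiv.piFinSuccAbove (fun _ : Fin (n+1) => ℝ) 0
    have hmp := measurePreserving_piFinSuccAbove (fun _ : Fin (n+1) => gaussianReal 0 v) 0
    have hS : (fun y : Fin (n+1) → ℝ => ∑ i, c i * y i)
        = (fun p : ℝ × ℝ => p.1 + p.2) ∘
          (Prod.map (fun t : ℝ => c 0 * t) (fun z : Fin n → ℝ => ∑ j, c (Fin.succ j) * z j)) ∘ e := by
      funext y
      simp [e, Function.comp_apply, MeasurableEquiv.piFinSuccAbove_apply, Prod.map_apply,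
        Fin.sum_univ_succ, Fin.zero_succAbove, Fin.tail]
    rw [hS, ← Function.comp_assoc, ← Measure.map_map (by fun_prop) e.measurable, hmp.map_eq,
      ← Measure.map_map (by fun_prop) (by fun_prop),
      ← Measure.map_prod_map _ _ (by fun_prop) (by fun_prop)]
    have h2 : (Measure.map (fun z : Fin n → ℝ => ∑ j, c (Fin.succ j) * z j)
        (Measure.pi fun _ => gaussianReal 0 v))
        = gaussianReal 0 ((∑ j, c (Fin.succ j) ^ 2).toNNReal * v) := ih _
    have h1 : Measure.map (fun t : ℝ => c 0 * t) (gaussianReal 0 v)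
        = gaussianReal 0 (⟨c 0 ^ 2, sq_nonneg _⟩ * v) := by
      rw [show (fun t : ℝ => c 0 * t) = (c 0 * ·) from rfl, gaussianReal_map_const_mul, mul_zero]
      rfl
    rw [h1, h2, gaussian_conv]
    congr 1
    ext
    push_cast [NNReal.coe_mk, Real.coe_toNNReal _ (Finset.sum_nonneg fun i _ => sq_nonneg _)]
    rw [Fin.sum_univ_succ]
    change c 0 ^ 2 * (v : ℝ) + _ = _
    ring

lemma lintegral_pi_prod : ∀ (n : ℕ) (μ : Fin n → Measure ℝ), (∀ i, SigmaFinite (μ i)) →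
    ∀ (g : Fin n → ℝ → ℝ≥0∞), (∀ i, Measurable (g i)) →
    ∫⁻ y, ∏ i, g i (y i) ∂Measure.pi μ = ∏ i, ∫⁻ t, g i t ∂μ i := by
  intro n
  induction n with
  | zero =>
    intro μ _ g _
    simp [Measure.pi_empty_univ]
  | succ n ih =>
    intro μ hσ g hg
    haveI := hσ
    have hmp := measurePreserving_piFinSuccAbove μ 0
    have key : (fun y : ∀ j : Fin (n+1), ℝ => ∏ i, g i (y i))
        = fun y => (fun p : ℝ × (∀ j : Fin n, ℝ) => g 0 p.1 * ∏ j, g (Fin.succ j) (p.2 j))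
          ((MeasurableEquiv.piFinSuccAbove (fun _ : Fin (n+1) => ℝ) 0) y) := by
      funext y
      simp [MeasurableEquiv.piFinSuccAbove_apply, Fin.prod_univ_succ, Fin.zero_succAbove, Fin.tail]
    have hG : Measurable fun z : Fin n → ℝ => ∏ j, g (Fin.succ j) (z j) :=
      Finset.measurable_prod Finset.univ fun j _ => (hg _).comp (measurable_pi_apply j)
    have hF : Measurable fun p : ℝ × (Fin n → ℝ) => g 0 p.1 * ∏ j, g (Fin.succ j) (p.2 j) :=
      ((hg 0).comp measurable_fst).mul (hG.comp measurable_snd)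
    rw [key, hmp.lintegral_comp hF,
      lintegral_prod_mul ((hg 0).aemeasurable) hG.aemeasurable,
      ih _ (fun j => hσ _) _ (fun j => hg _), Fin.prod_univ_succ]
    simp [Fin.zero_succAbove]

lemma withDensity_pi {m : ℕ} (μ ν : Fin m → Measure ℝ) [∀ i, SigmaFinite (μ i)]
    [∀ i, SigmaFinite (ν i)] (f : Fin m → ℝ → ℝ≥0∞) (hf : ∀ i, Measurable (f i))
    (h : ∀ i, ν i = (μ i).withDensity (f i)) :
    Measure.pi ν = (Measure.pi μ).withDensity fun y => ∏ i, f i (y i) := by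
  refine Measure.pi_eq fun s hs => ?_
  rw [withDensity_apply _ (MeasurableSet.univ_pi hs)]
  have hind : ∀ y : Fin m → ℝ, (Set.univ.pi s).indicator (fun y => ∏ i, f i (y i)) y
      = ∏ i, (s i).indicator (f i) (y i) := by
    intro y
    by_cases hy : y ∈ Set.univ.pi s
    · rw [Set.indicator_of_mem hy]
      exact Finset.prod_congr rfl fun i _ =>
        (Set.indicator_of_mem (hy i (Set.mem_univ i)) _).symm
    · rw [Set.indicator_of_notMem hy]
      have hex : ∃ i, y i ∉ s i := by simpa [Set.mem_pi] using hy
      obtain ⟨i, hi⟩ := hex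
      exact (Finset.prod_eq_zero (Finset.mem_univ i) (Set.indicator_of_notMem hi _)).symm
  rw [← lintegral_indicator (MeasurableSet.univ_pi hs)]
  simp_rw [hind]
  rw [lintegral_pi_prod m μ (fun i => inferInstance) _ (fun i => (hf i).indicator (hs i))]
  exact Finset.prod_congr rfl fun i _ => by
    rw [lintegral_indicator (hs i), ← withDensity_apply _ (hs i), ← h i]

lemma gauss_tilt (c d : ℝ) {v : ℝ≥0} (hv : v ≠ 0) :
    gaussianReal (c + d) v = (gaussianReal c v).withDensity
      (fun y => ENNReal.ofReal (rexp ((d * (y - c) - d ^ 2 / 2) / v))) := by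
  have hvp : (0:ℝ) < v := lt_of_le_of_ne v.coe_nonneg (by exact_mod_cast hv.symm)
  rw [gaussianReal_of_var_ne_zero _ hv, gaussianReal_of_var_ne_zero _ hv,
    ← withDensity_mul _ (measurable_gaussianPDF _ _) (by fun_prop)]
  congr 1
  funext y
  rw [Pi.mul_apply, gaussianPDF, gaussianPDF,
    ← ENNReal.ofReal_mul (gaussianPDFReal_nonneg _ _ _)]
  congr 1
  simp only [gaussianPDFReal]
  conv_rhs => rw [mul_assoc, ← Real.exp_add]
  congr 1
  congr 1
  field_simp
  ring

lemma map_sum_gaussPi {m : ℕ} (v : ℝ≥0) (x c : Fin m → ℝ) :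
    Measure.map (fun y : Fin m → ℝ => ∑ i, c i * y i)
        (Measure.pi fun i => gaussianReal (x i) v)
      = gaussianReal (∑ i, c i * x i) ((∑ i, c i ^ 2).toNNReal * v) := by
  have hshift : MeasurePreserving (fun (z : Fin m → ℝ) i => x i + z i)
      (Measure.pi fun _ => gaussianReal 0 v) (Measure.pi fun i => gaussianReal (x i) v) := by
    refine measurePreserving_pi _ _ fun i => ⟨by fun_prop, ?_⟩
    exact (gaussianReal_map_const_add (x i)).trans (by rw [zero_add])
  rw [← hshift.map_eq, Measure.map_map (by fun_prop) hshift.measurable]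
  have hcomp : ((fun y : Fin m → ℝ => ∑ i, c i * y i) ∘ fun z i => x i + z i)
      = ((∑ i, c i * x i) + ·) ∘ (fun z : Fin m → ℝ => ∑ i, c i * z i) := by
    funext z
    simp [mul_add, Finset.sum_add_distrib]
  rw [hcomp, ← Measure.map_map (by fun_prop) (by fun_prop), gauss_sum_law,
    gaussianReal_map_const_add, zero_add]

/-- The isotropic Gaussian measure `N(x, σ²I)` on `ℝ^m`. -/
noncomputable def gaussPi (m : ℕ) (σ : ℝ) (x : EuclideanSpace ℝ (Fin m)) :
    Measure (EuclideanSpace ℝ (Fin m)) :=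
  (Measure.pi fun i => gaussianReal (x i) ⟨σ ^ 2, sq_nonneg σ⟩).map
    (MeasurableEquiv.toLp 2 (Fin m → ℝ))

/-- Neyman–Pearson lower bound: if `N(x, σ²I)(A) ≥ Φ(a)` then
`N(x + δ, σ²I)(A) ≥ Φ(a − ‖δ‖₂/σ)`. -/
theorem gaussian_shift_lower_bound (m : ℕ) (σ : ℝ) (hσ : 0 < σ)
    (x δ : EuclideanSpace ℝ (Fin m)) (a : ℝ)
    (A : Set (EuclideanSpace ℝ (Fin m))) (hA : MeasurableSet A)
    (h : ENNReal.ofReal (Phi a) ≤ gaussPi m σ x A) :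
    ENNReal.ofReal (Phi (a - ‖δ‖ / σ)) ≤ gaussPi m σ (x + δ) A := by
  by_cases hδ0 : δ = 0
  · subst hδ0
    simpa using h
  set v : ℝ≥0 := ⟨σ ^ 2, sq_nonneg σ⟩ with hv_def
  have hvr : (v : ℝ) = σ ^ 2 := rfl
  have hv : v ≠ 0 := by
    rw [← NNReal.coe_ne_zero, hvr]
    positivity
  have hn : (0:ℝ) < ‖δ‖ := norm_pos_iff.mpr hδ0
  have hns : ‖δ‖ ^ 2 = ∑ i, δ i ^ 2 := by
    rw [EuclideanSpace.norm_eq, Real.sq_sqrt (by positivity)]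
    simp [sq_abs]
  set c : ℝ := ∑ i, δ i * x i with hc_def
  set V : ℝ≥0 := (∑ i, δ i ^ 2).toNNReal * v with hV_def
  have hVr : (V : ℝ) = ‖δ‖ ^ 2 * σ ^ 2 := by
    rw [hV_def]
    push_cast [Real.coe_toNNReal _ (Finset.sum_nonneg fun i _ => sq_nonneg (δ i))]
    rw [← hns, hvr]
  have hV : V ≠ 0 := by
    rw [← NNReal.coe_ne_zero, hVr]
    positivity
  have hsV : Real.sqrt V = ‖δ‖ * σ := by
    rw [hVr, show ‖δ‖ ^ 2 * σ ^ 2 = (‖δ‖ * σ) ^ 2 by ring, Real.sqrt_sq (by positivity)]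
  set b : ℝ := ‖δ‖ * σ * a + c with hb_def
  have hgm : Measurable (fun y : EuclideanSpace ℝ (Fin m) => ∑ i, δ i * y i) := by
    fun_prop
  set H : Set (EuclideanSpace ℝ (Fin m)) :=
    (fun y : EuclideanSpace ℝ (Fin m) => ∑ i, δ i * y i) ⁻¹' (Set.Iic b) with hH_def
  have hHm : MeasurableSet H := hgm measurableSet_Iic
  have hlawx : Measure.map (fun y : EuclideanSpace ℝ (Fin m) => ∑ i, δ i * y i)
      (gaussPi m σ x) = gaussianReal c V := by
    rw [gaussPi, Measure.map_map hgm (MeasurableEquiv.toLp 2 (Fin m → ℝ)).measurable]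
    exact map_sum_gaussPi v x δ
  have hlawxδ : Measure.map (fun y : EuclideanSpace ℝ (Fin m) => ∑ i, δ i * y i)
      (gaussPi m σ (x + δ)) = gaussianReal (c + ‖δ‖ ^ 2) V := by
    have h2 := map_sum_gaussPi v (fun i => x i + δ i) δ
    have h3 : (∑ i, δ i * (x i + δ i)) = c + ‖δ‖ ^ 2 := by
      rw [hc_def, hns]
      simp [mul_add, Finset.sum_add_distrib, sq]
    rw [h3] at h2
    rw [gaussPi, Measure.map_map hgm (MeasurableEquiv.toLp 2 (Fin m → ℝ)).measurable]
    exact h2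
  have hμH : gaussPi m σ x H = ENNReal.ofReal (Phi a) := by
    rw [hH_def, ← Measure.map_apply hgm measurableSet_Iic, hlawx,
      gaussianReal_Iic _ _ hV, hsV]
    congr 2
    rw [hb_def]
    field_simp
    ring
  have hνH : gaussPi m σ (x + δ) H = ENNReal.ofReal (Phi (a - ‖δ‖ / σ)) := by
    rw [hH_def, ← Measure.map_apply hgm measurableSet_Iic, hlawxδ,
      gaussianReal_Iic _ _ hV, hsV]
    congr 2
    rw [hb_def]
    field_simp
    ring
  set L : EuclideanSpace ℝ (Fin m) → ℝ≥0∞ := fun y =>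
    ENNReal.ofReal (rexp (((∑ i, δ i * y i) - c - ‖δ‖ ^ 2 / 2) / (v : ℝ))) with hL_def
  have hLm : Measurable L := by
    apply Measurable.ennreal_ofReal
    exact (Real.measurable_exp.comp (((hgm.sub measurable_const).sub measurable_const).div_const _))
  have hρ : gaussPi m σ (x + δ) = (gaussPi m σ x).withDensity L := by
    have hwd := withDensity_pi (fun i => gaussianReal (x i) v)
      (fun i => gaussianReal (x i + δ i) v)
      (fun i y => ENNReal.ofReal (rexp ((δ i * (y - x i) - δ i ^ 2 / 2) / (v : ℝ))))
      (fun i => by fun_prop)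
      (fun i => gauss_tilt (x i) (δ i) hv)
    rw [show gaussPi m σ (x + δ) = (Measure.pi (fun i => gaussianReal (x i + δ i) v)).map
        (MeasurableEquiv.toLp 2 (Fin m → ℝ)) from rfl,
      hwd]
    ext s hs
    rw [MeasurableEquiv.map_apply, withDensity_apply _ hs, gaussPi, MeasurableEquiv.restrict_map,
      lintegral_map_equiv, withDensity_apply _ ((MeasurableEquiv.toLp 2 (Fin m → ℝ)).measurable hs)]
    congr 1
    funext y
    show _ = L (WithLp.toLp 2 y)
    rw [← ENNReal.ofReal_prod_of_nonneg (fun i _ => Real.exp_nonneg _), ← Real.exp_sum]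
    congr 2
    rw [← Finset.sum_div]
    congr 1
    rw [hc_def, hns]
    simp only [mul_sub]
    rw [Finset.sum_sub_distrib, Finset.sum_sub_distrib, ← Finset.sum_div]
  set t : ℝ≥0∞ := ENNReal.ofReal (rexp ((b - c - ‖δ‖ ^ 2 / 2) / (v : ℝ))) with ht_def
  have hvpos : (0:ℝ) < (v:ℝ) := by rw [hvr]; positivity
  have hLle : ∀ y ∈ H, L y ≤ t := by
    intro y hy
    have hyb : (∑ i, δ i * y i) ≤ b := hy
    exact ENNReal.ofReal_le_ofReal (Real.exp_le_exp.2 (by gcongr))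
  have hLge : ∀ y ∈ Hᶜ, t ≤ L y := by
    intro y hy
    have hyb : b ≤ (∑ i, δ i * y i) := le_of_lt (by simpa [hH_def] using hy)
    exact ENNReal.ofReal_le_ofReal (Real.exp_le_exp.2 (by gcongr))
  haveI : IsProbabilityMeasure (gaussPi m σ x) := by
    have hp : IsProbabilityMeasure
        (Measure.pi fun i : Fin m => gaussianReal ((x : Fin m → ℝ) i) v) := inferInstance
    exact Measure.isProbabilityMeasure_map (MeasurableEquiv.toLp 2 (Fin m → ℝ)).measurable.aemeasurable
  -- measure comparison
  have hμHA : gaussPi m σ x (H \ A) ≤ gaussPi m σ x (A \ H) := by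
    have e1 := measure_inter_add_diff (μ := gaussPi m σ x) H hA
    have e2 := measure_inter_add_diff (μ := gaussPi m σ x) A hHm
    have hHG : gaussPi m σ x H ≤ gaussPi m σ x A := hμH ▸ h
    rw [← e1, ← e2, Set.inter_comm A H] at hHG
    exact (ENNReal.add_le_add_iff_left (measure_ne_top _ _)).1 hHG
  rw [← hνH, hρ, withDensity_apply _ hHm, withDensity_apply _ hA,
    ← lintegral_inter_add_diff L H hA, ← lintegral_inter_add_diff L A hHm,
    Set.inter_comm H A]
  refine add_le_add_right ?_ _
  calc ∫⁻ y in H \ A, L y ∂gaussPi m σ x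
      ≤ ∫⁻ _ in H \ A, t ∂gaussPi m σ x := by
        refine setLIntegral_mono measurable_const fun y hy => hLle y hy.1
    _ = t * gaussPi m σ x (H \ A) := setLIntegral_const _ _
    _ ≤ t * gaussPi m σ x (A \ H) := mul_le_mul_right hμHA _
    _ = ∫⁻ _ in A \ H, t ∂gaussPi m σ x := (setLIntegral_const _ _).symm
    _ ≤ ∫⁻ y in A \ H, L y ∂gaussPi m σ x := by
        refine setLIntegral_mono hLm fun y hy => hLge y hy.2
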